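/- In the truncated polynomial ring k[x]/(x^p) over a field k of characteristic p, the operators X (multiplication by x) and D (formal derivative d/dx) satisfy DX - XD = 1, X^p = 0, D^p = 0, and the k-subalgebra of End_k(k[x]/(x^p)) generated by X and D is all of End_k(k[x]/(x^p)). -/

import Mathlib

set_option maxHeartbeats 1000000

open Polynomial

section Stmt11Aux

variable (p : ℕ) [Fact p.Prime] (k : Type*) [Field k] [CharP k p]

noncomputable def Dq : Module.End k (Polynomial k ⧸ Ideal.span {(X : k[X]) ^ p}) :=
  (Submodule.liftQ ((Ideal.span {(X : k[X]) ^ p}).restrictScalars k)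
    ((Ideal.Quotient.mkₐ k (Ideal.span {(X : k[X]) ^ p})).toLinearMap ∘ₗ
      (Polynomial.derivative : k[X] →ₗ[k] k[X]))
    (by
      intro f hf
      simp only [Submodule.restrictScalars_mem, Ideal.mem_span_singleton] at hf
      obtain ⟨g, rfl⟩ := hf
      simp only [LinearMap.mem_ker, LinearMap.coe_comp, Function.comp_apply,
        derivative_mul, derivative_X_pow, AlgHom.toLinearMap_apply, Ideal.Quotient.mkₐ_eq_mk,
        map_add]
      rw [CharP.cast_eq_zero k p]
      simp [Ideal.Quotient.eq_zero_iff_mem, Ideal.mem_span_singleton])) ∘ₗ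
  (Submodule.Quotient.restrictScalarsEquiv k ((Ideal.span {(X : k[X]) ^ p}))).symm.toLinearMap

theorem Dq_mk (f : k[X]) :
    Dq p k (Ideal.Quotient.mk (Ideal.span {(X : k[X]) ^ p}) f) =
      Ideal.Quotient.mk _ (derivative f) := rfl

noncomputable def bq : Module.Basis (Fin p) k (Polynomial k ⧸ Ideal.span {(X : k[X]) ^ p}) :=
  ((AdjoinRoot.powerBasis' (monic_X_pow (R := k) p)).basis).reindex
    (finCongr (by simp))

theorem bq_eq (i : Fin p) :
    bq p k i = Ideal.Quotient.mk (Ideal.span {(X : k[X]) ^ p}) (X ^ (i : ℕ)) := by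
  rw [bq]
  erw [Module.Basis.reindex_apply, PowerBasis.basis_eq_pow]
  simp only [finCongr_symm, finCongr_apply, Fin.coe_cast]
  show AdjoinRoot.root ((X : k[X]) ^ p) ^ (i : ℕ) = _
  rw [map_pow]
  rfl

theorem iterp (f : k[X]) : derivative^[p] f = 0 := by
  induction f using Polynomial.induction_on' with
  | add f g hf hg => rw [iterate_map_add derivative p f g, hf, hg, add_zero]
  | monomial n a =>
    rw [← C_mul_X_pow_eq_monomial, iterate_derivative_C_mul,
      iterate_derivative_X_pow_eq_smul]
    have : ((n.descFactorial p : k)) = 0 := by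
      rw [CharP.cast_eq_zero_iff k p]
      exact dvd_trans (Nat.dvd_factorial (Fact.out (p := p.Prime)).pos le_rfl)
        (Nat.factorial_dvd_descFactorial n p)
    rw [this, zero_smul, mul_zero]

theorem Dq_pow_mk (n : ℕ) (f : k[X]) :
    ((Dq p k) ^ n) (Ideal.Quotient.mk (Ideal.span {(X : k[X]) ^ p}) f) =
      Ideal.Quotient.mk _ (derivative^[n] f) := by
  induction n generalizing f with
  | zero => rfl
  | succ n ih =>
    rw [pow_succ', Module.End.mul_apply, ih, Dq_mk, Function.iterate_succ_apply']

theorem mk_X_pow_zero (l : ℕ) (hl : p ≤ l) :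
    Ideal.Quotient.mk (Ideal.span {(X : k[X]) ^ p}) (X ^ l) = 0 := by
  rw [Ideal.Quotient.eq_zero_iff_mem, Ideal.mem_span_singleton]
  exact pow_dvd_pow X hl

theorem Dq_pow_X_pow (n l : ℕ) :
    ((Dq p k) ^ n) (Ideal.Quotient.mk (Ideal.span {(X : k[X]) ^ p}) (X ^ l)) =
      (l.descFactorial n : k) •
        Ideal.Quotient.mk (Ideal.span {(X : k[X]) ^ p}) (X ^ (l - n)) := by
  rw [Dq_pow_mk, iterate_derivative_X_pow_eq_smul, ← Ideal.Quotient.mkₐ_eq_mk k, map_smul]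

theorem X_pow_apply (n : ℕ) (v : Polynomial k ⧸ Ideal.span {(X : k[X]) ^ p}) :
    ((LinearMap.mulLeft k
        (Ideal.Quotient.mk (Ideal.span {(X : k[X]) ^ p}) X)) ^ n) v =
      Ideal.Quotient.mk (Ideal.span {(X : k[X]) ^ p}) (X ^ n) * v := by
  rw [LinearMap.pow_mulLeft, LinearMap.mulLeft_apply, map_pow]

theorem key (i j l : Fin p) :
    ((LinearMap.mulLeft k (Ideal.Quotient.mk (Ideal.span {(X : k[X]) ^ p}) X)) ^ (i : ℕ) *
      (Dq p k) ^ (p - 1) *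
      (LinearMap.mulLeft k (Ideal.Quotient.mk (Ideal.span {(X : k[X]) ^ p}) X)) ^ (p - 1) *
      (Dq p k) ^ (j : ℕ)) (bq p k l) =
    if l = j then (((j : ℕ).factorial : k) * ((p - 1).factorial : k)) • bq p k i else 0 := by
  have hp : 0 < p := (Fact.out (p := p.Prime)).pos
  rcases eq_or_ne l j with rfl | hne
  · simp only [if_pos rfl, bq_eq, Module.End.mul_apply, Dq_pow_X_pow, Nat.sub_self,
      Nat.descFactorial_self, LinearMap.map_smul, X_pow_apply, mul_smul_comm,
      ← map_mul, ← pow_add, Nat.add_zero, smul_smul, if_true]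
  · rw [if_neg hne, bq_eq, Module.End.mul_apply, Module.End.mul_apply, Module.End.mul_apply,
      Dq_pow_X_pow]
    rcases lt_or_gt_of_ne (fun h => hne (Fin.ext h)) with hlt | hgt
    · rw [Nat.descFactorial_eq_zero_iff_lt.mpr hlt]
      simp
    · simp only [LinearMap.map_smul, X_pow_apply, ← map_mul, ← pow_add]
      rw [mk_X_pow_zero p k (p - 1 + ((l : ℕ) - (j : ℕ))) (by omega)]
      simp

theorem fact_ne_zero (m : ℕ) (hm : m < p) : (m.factorial : k) ≠ 0 := by
  rw [Ne, CharP.cast_eq_zero_iff k p]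
  intro h
  exact absurd ((Nat.Prime.dvd_factorial Fact.out).mp h) (by omega)

theorem comm1 :
    Dq p k * LinearMap.mulLeft k (Ideal.Quotient.mk (Ideal.span {(X : k[X]) ^ p}) X) -
      LinearMap.mulLeft k (Ideal.Quotient.mk (Ideal.span {(X : k[X]) ^ p}) X) * Dq p k = 1 := by
  refine LinearMap.ext fun v => ?_
  obtain ⟨f, rfl⟩ := Ideal.Quotient.mk_surjective v
  simp only [LinearMap.sub_apply, Module.End.mul_apply, LinearMap.mulLeft_apply,
    Module.End.one_apply, ← map_mul, Dq_mk, derivative_mul, derivative_X, one_mul, map_add]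
  ring

theorem Xp0 :
    (LinearMap.mulLeft k (Ideal.Quotient.mk (Ideal.span {(X : k[X]) ^ p}) X)) ^ p = 0 := by
  rw [LinearMap.pow_mulLeft, ← map_pow, Ideal.Quotient.eq_zero_iff_mem.mpr
    (Ideal.mem_span_singleton_self _)]
  exact LinearMap.mulLeft_zero_eq_zero _ _

theorem Dp0 : (Dq p k) ^ p = 0 := by
  refine LinearMap.ext fun v => ?_
  obtain ⟨f, rfl⟩ := Ideal.Quotient.mk_surjective v
  rw [Dq_pow_mk, iterp, map_zero, LinearMap.zero_apply]

theorem adj :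
    Algebra.adjoin k
      {LinearMap.mulLeft k (Ideal.Quotient.mk (Ideal.span {(X : k[X]) ^ p}) X), Dq p k} = ⊤ := by
  have hp : 0 < p := (Fact.out (p := p.Prime)).pos
  set Xop : Module.End k (Polynomial k ⧸ Ideal.span {(X : k[X]) ^ p}) :=
    LinearMap.mulLeft k (Ideal.Quotient.mk (Ideal.span {(X : k[X]) ^ p}) X) with hXop
  rw [eq_top_iff]
  rintro g -
  have hX : Xop ∈ Algebra.adjoin k {Xop, Dq p k} :=
    Algebra.subset_adjoin (Set.mem_insert _ _)
  have hD : Dq p k ∈ Algebra.adjoin k {Xop, Dq p k} :=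
    Algebra.subset_adjoin (Set.mem_insert_of_mem _ rfl)
  have hT : ∀ i j : Fin p,
      (Xop ^ (i : ℕ) * (Dq p k) ^ (p - 1) * Xop ^ (p - 1) * (Dq p k) ^ (j : ℕ)) ∈
        Algebra.adjoin k {Xop, Dq p k} := fun i j =>
    mul_mem (mul_mem (mul_mem (pow_mem hX _) (pow_mem hD _)) (pow_mem hX _)) (pow_mem hD _)
  have hc : ∀ j : Fin p, (((j : ℕ).factorial : k) * ((p - 1).factorial : k)) ≠ 0 := fun j =>
    mul_ne_zero (fact_ne_zero p k _ j.isLt) (fact_ne_zero p k _ (by omega))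
  have hgeq : g = ∑ j : Fin p, ∑ i : Fin p,
      ((bq p k).repr (g (bq p k j)) i * (((j : ℕ).factorial : k) * ((p - 1).factorial : k))⁻¹) •
        (Xop ^ (i : ℕ) * (Dq p k) ^ (p - 1) * Xop ^ (p - 1) * (Dq p k) ^ (j : ℕ)) := by
    apply (bq p k).ext
    intro l
    rw [LinearMap.sum_apply]
    have : ∀ j : Fin p, (∑ i : Fin p,
        ((bq p k).repr (g (bq p k j)) i * (((j : ℕ).factorial : k) * ((p - 1).factorial : k))⁻¹) •
          (Xop ^ (i : ℕ) * (Dq p k) ^ (p - 1) * Xop ^ (p - 1) * (Dq p k) ^ (j : ℕ)))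
          (bq p k l) = if l = j then g (bq p k l) else 0 := by
      intro j
      rw [LinearMap.sum_apply]
      rcases eq_or_ne l j with rfl | hne
      · simp only [if_pos rfl]
        have : ∀ i : Fin p,
            (((bq p k).repr (g (bq p k l)) i * (((l : ℕ).factorial : k) * ((p - 1).factorial : k))⁻¹) •
              (Xop ^ (i : ℕ) * (Dq p k) ^ (p - 1) * Xop ^ (p - 1) * (Dq p k) ^ (l : ℕ)))
              (bq p k l) = (bq p k).repr (g (bq p k l)) i • bq p k i := by
          intro i
          rw [LinearMap.smul_apply, key, if_pos rfl, smul_smul, mul_assoc,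
            inv_mul_cancel₀ (hc l), mul_one]
        rw [Finset.sum_congr rfl fun i _ => this i]
        exact (bq p k).sum_repr _
      · rw [if_neg hne]
        apply Finset.sum_eq_zero
        intro i _
        rw [LinearMap.smul_apply, key, if_neg hne, smul_zero]
    rw [Finset.sum_congr rfl fun j _ => this j, Finset.sum_ite_eq Finset.univ l
      (fun _ => g (bq p k l)), if_pos (Finset.mem_univ l)]
  rw [hgeq]
  exact sum_mem fun j _ => sum_mem fun i _ =>
    Subalgebra.smul_mem _ (hT i j) _

end Stmt11Aux

theorem stmt11 (p : ℕ) [Fact p.Prime] (k : Type*) [Field k] [CharP k p] :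
    ∃ D : Module.End k (Polynomial k ⧸ Ideal.span {(Polynomial.X : Polynomial k) ^ p}),
      (∀ f : Polynomial k,
        D (Ideal.Quotient.mk (Ideal.span {(Polynomial.X : Polynomial k) ^ p}) f) =
          Ideal.Quotient.mk (Ideal.span {(Polynomial.X : Polynomial k) ^ p})
            (Polynomial.derivative f)) ∧
      (letI X : Module.End k (Polynomial k ⧸ Ideal.span {(Polynomial.X : Polynomial k) ^ p}) :=
        LinearMap.mulLeft k
          (Ideal.Quotient.mk (Ideal.span {(Polynomial.X : Polynomial k) ^ p}) Polynomial.X)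
      D * X - X * D = 1 ∧ X ^ p = 0 ∧ D ^ p = 0 ∧
        Algebra.adjoin k {X, D} = ⊤) :=
  ⟨Dq p k, fun f => Dq_mk p k f, comm1 p k, Xp0 p k, Dp0 p k, adj p k⟩
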